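/- arXiv:2205.12666 — 2 statements merged into one kernel-verified Lean document; each statement's English description precedes it below -/
import Mathlib

section
/- Let (X,d) be a complete extended metric space and S a set of pairs (x,x') of distinct points of X with d(x,x') < ∞ which contains every finite-distance pair of distinct points that is not joined by a metric segment in X. Form the S-convex completion of X: to the disjoint union of X and one copy of the real interval [0, d(x,x')] for each pair (x,x') ∈ S, apply the gluing pseudodistance construction which identifies, for each pair, the endpoint 0 of its interval with x and the endpoint d(x,x') with x', and take the metric quotient. Then the S-convex completion is a complete, convex extended metric space. In particular, taking S to be the set of all finite-distance pairs of distinct points, the convex completion of any complete extended metric space is complete and convex. -/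
open ENNReal NNReal

variable {X : Type*} [EMetricSpace X]

/-- The underlying set of the `S`-convex completion before the metric identification: the
disjoint union of `X` and, for each pair `p ∈ S`, a copy of the real interval
`[0, d(p.1, p.2)]`. -/
abbrev SGlueSpace (S : Set (X × X)) : Type _ :=
  X ⊕ ((p : S) × (Set.Icc (0 : ℝ) (edist (p : X × X).1 (p : X × X).2).toReal))

open Classical in
/-- The base extended distance on the disjoint union: the original distances within each
summand and within each attached interval, and `∞` across distinct summands. -/
noncomputable def sglueBase (S : Set (X × X)) : SGlueSpace S → SGlueSpace S → ℝ≥0∞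
  | Sum.inl x, Sum.inl x' => edist x x'
  | Sum.inr ⟨p, t⟩, Sum.inr ⟨p', t'⟩ =>
      if p = p' then edist (t : ℝ) (t' : ℝ) else ⊤
  | _, _ => ⊤

/-- The gluing identifications: for each pair `p = (x, x') ∈ S`, the endpoint `0` of the
attached interval is identified with `x` and the endpoint `d(x, x')` with `x'`. -/
def sglueRel (S : Set (X × X)) : SGlueSpace S → SGlueSpace S → Prop := fun a b =>
  ∃ p : S,
    (a = Sum.inl (p : X × X).1 ∧
      b = Sum.inr ⟨p, ⟨0, Set.left_mem_Icc.mpr ENNReal.toReal_nonneg⟩⟩) ∨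
    (a = Sum.inl (p : X × X).2 ∧
      b = Sum.inr ⟨p, ⟨(edist (p : X × X).1 (p : X × X).2).toReal,
        Set.right_mem_Icc.mpr ENNReal.toReal_nonneg⟩⟩)

/-- The gluing pseudodistance of the `S`-convex completion: the infimum of chain sums, the
chains passing between summands only through the gluing identifications (or their
consequences under the generated equivalence relation). -/
noncomputable def sglueDist (S : Set (X × X)) (a b : SGlueSpace S) : ℝ≥0∞ :=
  sInf {L : ℝ≥0∞ | ∃ (n : ℕ) (p q : Fin (n + 1) → SGlueSpace S),
    p 0 = a ∧ q (Fin.last n) = b ∧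
    (∀ s : Fin n, Relation.EqvGen (sglueRel S) (q s.castSucc) (p s.succ)) ∧
    L = ∑ s, sglueBase S (p s) (q s)}

/-- A metric segment in `X` joining `x` and `x'` (with `d(x, x') < ∞`): an isometric map
`[0, d(x, x')] → X` with the prescribed endpoints. -/
def JoinedBySegment (x x' : X) : Prop :=
  ∃ φ : ℝ → X,
    (∀ s ∈ Set.Icc (0 : ℝ) (edist x x').toReal,
      ∀ t ∈ Set.Icc (0 : ℝ) (edist x x').toReal, edist (φ s) (φ t) = edist s t) ∧
    φ 0 = x ∧ φ (edist x x').toReal = x'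

namespace SGlueAux

variable {S : Set (X × X)}

def chains (S : Set (X × X)) (a b : SGlueSpace S) : Set ℝ≥0∞ :=
  {L : ℝ≥0∞ | ∃ (n : ℕ) (p q : Fin (n + 1) → SGlueSpace S),
    p 0 = a ∧ q (Fin.last n) = b ∧
    (∀ s : Fin n, Relation.EqvGen (sglueRel S) (q s.castSucc) (p s.succ)) ∧
    L = ∑ s, sglueBase S (p s) (q s)}

lemma sglueDist_eq (a b : SGlueSpace S) : sglueDist S a b = sInf (chains S a b) := rfl

lemma sglueBase_self (a : SGlueSpace S) : sglueBase S a a = 0 := by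
  cases a with
  | inl x => simp [sglueBase]
  | inr q => obtain ⟨p, t⟩ := q; simp [sglueBase]

lemma sglueBase_comm (a b : SGlueSpace S) : sglueBase S a b = sglueBase S b a := by
  cases a with
  | inl x =>
    cases b with
    | inl y => simp [sglueBase, edist_comm]
    | inr q => obtain ⟨p, t⟩ := q; simp [sglueBase]
  | inr q =>
    obtain ⟨p, t⟩ := q
    cases b with
    | inl y => simp [sglueBase]
    | inr q' =>
      obtain ⟨p', t'⟩ := q'
      by_cases h : p = p'
      · subst h; simp [sglueBase, edist_comm]
      · simp [sglueBase, h, Ne.symm h]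

lemma base_mem_chains (a b : SGlueSpace S) : sglueBase S a b ∈ chains S a b := by
  refine ⟨0, fun _ => a, fun _ => b, rfl, rfl, fun s => s.elim0, ?_⟩
  simp

lemma sglueDist_le_base (a b : SGlueSpace S) : sglueDist S a b ≤ sglueBase S a b :=
  sInf_le (base_mem_chains a b)

lemma chains_extend {a b y z : SGlueSpace S} {L : ℝ≥0∞} (hL : L ∈ chains S a b)
    (h : Relation.EqvGen (sglueRel S) b y) :
    L + sglueBase S y z ∈ chains S a z := by
  obtain ⟨n, p, q, hp0, hq, hlink, rfl⟩ := hL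
  refine ⟨n + 1, Fin.snoc p y, Fin.snoc q z, ?_, ?_, ?_, ?_⟩
  · rw [show (0 : Fin (n + 2)) = (0 : Fin (n + 1)).castSucc by simp, Fin.snoc_castSucc]
    exact hp0
  · rw [Fin.snoc_last]
  · intro s
    induction s using Fin.lastCases with
    | last =>
      rw [Fin.snoc_castSucc, Fin.succ_last, Fin.snoc_last, hq]
      exact h
    | cast i =>
      rw [Fin.snoc_castSucc, Fin.succ_castSucc, Fin.snoc_castSucc]
      exact hlink i
  · simp [Fin.sum_univ_castSucc]

lemma sglueDist_le_extend {a b y z : SGlueSpace S}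
    (h : Relation.EqvGen (sglueRel S) b y) :
    sglueDist S a z ≤ sglueDist S a b + sglueBase S y z := by
  rw [sglueDist_eq, sglueDist_eq, ENNReal.sInf_add]
  exact le_iInf₂ fun L hL => sInf_le (chains_extend hL h)

lemma sglueDist_le_of_eqvGen {a b y : SGlueSpace S}
    (h : Relation.EqvGen (sglueRel S) b y) :
    sglueDist S a y ≤ sglueDist S a b := by
  have := sglueDist_le_extend (a := a) (z := y) h
  simpa [sglueBase_self] using this

lemma sglueDist_triangle_base (a b c : SGlueSpace S) :
    sglueDist S a c ≤ sglueDist S a b + sglueBase S b c :=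
  sglueDist_le_extend (Relation.EqvGen.refl b)

lemma chains_comm {a b : SGlueSpace S} : chains S a b ⊆ chains S b a := by
  rintro L ⟨n, p, q, rfl, rfl, hlink, rfl⟩
  refine ⟨n, fun s => q s.rev, fun s => p s.rev, by simp, by simp,
    fun s => ?_, ?_⟩
  · show Relation.EqvGen (sglueRel S) (p s.castSucc.rev) (q s.succ.rev)
    rw [Fin.rev_castSucc, Fin.rev_succ]
    exact ((hlink s.rev).symm _ _)
  · show _ = ∑ s : Fin (n + 1), sglueBase S (q s.rev) (p s.rev)
    refine Fintype.sum_bijective Fin.rev Fin.rev_involutive.bijective _ _ (fun s => ?_)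
    simp [Fin.rev_rev, sglueBase_comm]

lemma sglueDist_comm (a b : SGlueSpace S) : sglueDist S a b = sglueDist S b a :=
  le_antisymm (sInf_le_sInf chains_comm) (sInf_le_sInf chains_comm)

lemma eqvGen_invariant {F : SGlueSpace S → ℝ≥0∞}
    (hrel : ∀ a b, sglueRel S a b → F a = F b) {a b : SGlueSpace S}
    (h : Relation.EqvGen (sglueRel S) a b) : F a = F b := by
  induction h with
  | rel a b h => exact hrel a b h
  | refl => rfl
  | symm _ _ _ ih => exact ih.symm
  | trans _ _ _ _ _ ih1 ih2 => exact ih1.trans ih2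

lemma chain_bound {F : SGlueSpace S → ℝ≥0∞}
    (hlip : ∀ a b, F b ≤ F a + sglueBase S a b)
    (hrel : ∀ a b, sglueRel S a b → F a = F b) :
    ∀ (n : ℕ) (p q : Fin (n + 1) → SGlueSpace S),
      (∀ s : Fin n, Relation.EqvGen (sglueRel S) (q s.castSucc) (p s.succ)) →
      F (q (Fin.last n)) ≤ F (p 0) + ∑ s, sglueBase S (p s) (q s) := by
  intro n
  induction n with
  | zero =>
    intro p q _
    simpa using hlip (p 0) (q 0)
  | succ n ih =>
    intro p q hlink
    have h1 := ih (fun s => p s.castSucc) (fun s => q s.castSucc) (fun s => by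
      have := hlink s.castSucc
      rwa [Fin.succ_castSucc] at this)
    have h2 : F (p (Fin.last (n + 1))) = F (q ((Fin.last n).castSucc)) := by
      have := eqvGen_invariant hrel (hlink (Fin.last n))
      rw [Fin.succ_last] at this
      exact this.symm
    calc F (q (Fin.last (n + 1)))
        ≤ F (p (Fin.last (n + 1))) +
            sglueBase S (p (Fin.last (n + 1))) (q (Fin.last (n + 1))) := hlip _ _
      _ = F (q ((Fin.last n).castSucc)) +
            sglueBase S (p (Fin.last (n + 1))) (q (Fin.last (n + 1))) := by rw [h2]
      _ ≤ (F (p 0) + ∑ s : Fin (n + 1), sglueBase S (p s.castSucc) (q s.castSucc)) +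
            sglueBase S (p (Fin.last (n + 1))) (q (Fin.last (n + 1))) := by
          exact add_le_add_left (by simpa using h1) _
      _ = F (p 0) + ∑ s, sglueBase S (p s) (q s) := by
          rw [Fin.sum_univ_castSucc (n := n + 1) (f := fun s => sglueBase S (p s) (q s))]
          exact add_assoc _ _ _

lemma le_sglueDist {F : SGlueSpace S → ℝ≥0∞}
    (hlip : ∀ a b, F b ≤ F a + sglueBase S a b)
    (hrel : ∀ a b, sglueRel S a b → F a = F b) (a b : SGlueSpace S) :
    F b ≤ F a + sglueDist S a b := by
  rw [sglueDist_eq, add_comm, ENNReal.sInf_add]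
  refine le_iInf₂ fun L hL => ?_
  obtain ⟨n, p, q, hp0, hq, hlink, rfl⟩ := hL
  rw [add_comm, ← hp0, ← hq]
  exact chain_bound hlip hrel n p q hlink

lemma sglueDist_triangle (a b c : SGlueSpace S) :
    sglueDist S a c ≤ sglueDist S a b + sglueDist S b c := by
  refine le_sglueDist (F := sglueDist S a) (fun x y => sglueDist_triangle_base a x y)
    (fun x y h => ?_) b c
  exact le_antisymm (sglueDist_le_of_eqvGen ((Relation.EqvGen.rel x y h).symm _ _))
    (sglueDist_le_of_eqvGen (Relation.EqvGen.rel x y h))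

lemma sglueDist_self (a : SGlueSpace S) : sglueDist S a a = 0 :=
  le_antisymm (by simpa [sglueBase_self] using sglueDist_le_base a a) zero_le

lemma sglueDist_eq_zero_of_eqvGen {a b : SGlueSpace S}
    (h : Relation.EqvGen (sglueRel S) a b) : sglueDist S a b = 0 :=
  le_antisymm (le_of_le_of_eq (sglueDist_le_of_eqvGen (a := a) h) (sglueDist_self a))
    zero_le

lemma sglueDist_congr_right {a b b' : SGlueSpace S} (h : sglueDist S b b' = 0) :
    sglueDist S a b = sglueDist S a b' := by
  refine le_antisymm ?_ ?_
  · have := sglueDist_triangle a b' b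
    rwa [sglueDist_comm b' b, h, add_zero] at this
  · have := sglueDist_triangle a b b'
    rwa [h, add_zero] at this

lemma sglueDist_congr_left {a a' b : SGlueSpace S} (h : sglueDist S a a' = 0) :
    sglueDist S a b = sglueDist S a' b := by
  rw [sglueDist_comm a b, sglueDist_comm a' b]
  exact sglueDist_congr_right h


section Potentials

lemma ofReal_lip (s t : ℝ) : ENNReal.ofReal s ≤ ENNReal.ofReal t + edist s t := by
  rw [edist_dist]
  calc ENNReal.ofReal s ≤ ENNReal.ofReal (t + dist s t) :=
        ENNReal.ofReal_le_ofReal (by rw [Real.dist_eq]; cases abs_cases (s - t) <;> linarith)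
    _ ≤ _ := ENNReal.ofReal_add_le

noncomputable def distToX (x : X) : SGlueSpace S → ℝ≥0∞
  | Sum.inl z => edist x z
  | Sum.inr ⟨p, t⟩ =>
      min (edist x (p : X × X).1 + ENNReal.ofReal (t : ℝ))
        (edist x (p : X × X).2 +
          ENNReal.ofReal ((edist (p : X × X).1 (p : X × X).2).toReal - (t : ℝ)))

lemma distToX_lip (x : X) :
    ∀ a b : SGlueSpace S, distToX x b ≤ distToX x a + sglueBase S a b := by
  intro a b
  cases a with
  | inl z =>
    cases b with
    | inl z' =>
      show edist x z' ≤ edist x z + sglueBase S (Sum.inl z) (Sum.inl z')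
      have : sglueBase S (Sum.inl z) (Sum.inl z') = edist z z' := by simp [sglueBase]
      rw [this]; exact edist_triangle _ _ _
    | inr q =>
      obtain ⟨p, t⟩ := q
      have : sglueBase S (Sum.inl z) (Sum.inr ⟨p, t⟩) = ⊤ := by simp [sglueBase]
      rw [this, add_top]; exact le_top
  | inr q =>
    obtain ⟨p, t⟩ := q
    cases b with
    | inl z' =>
      have : sglueBase S (Sum.inr ⟨p, t⟩) (Sum.inl z') = ⊤ := by simp [sglueBase]
      rw [this, add_top]; exact le_top
    | inr q' =>
      obtain ⟨p', t'⟩ := q'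
      by_cases h : p = p'
      · subst h
        have hbase : sglueBase S (Sum.inr ⟨p, t⟩) (Sum.inr ⟨p, t'⟩) = edist (t : ℝ) (t' : ℝ) := by
          simp [sglueBase]
        have habs : edist ((edist (p : X × X).1 (p : X × X).2).toReal - (t' : ℝ)) ((edist (p : X × X).1 (p : X × X).2).toReal - (t : ℝ)) = edist (t : ℝ) (t' : ℝ) := by
          rw [edist_dist, edist_dist, Real.dist_eq, Real.dist_eq]
          congr 1
          rw [show (edist (p : X × X).1 (p : X × X).2).toReal - (t' : ℝ) - ((edist (p : X × X).1 (p : X × X).2).toReal - (t : ℝ)) = (t : ℝ) - (t' : ℝ) by ring]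
        have h1 : edist x (p : X × X).1 + ENNReal.ofReal (t' : ℝ) ≤
            (edist x (p : X × X).1 + ENNReal.ofReal (t : ℝ)) + edist (t : ℝ) (t' : ℝ) := by
          rw [add_assoc]
          exact add_le_add_right ((ofReal_lip _ _).trans (by rw [edist_comm])) _
        have h2 : edist x (p : X × X).2 + ENNReal.ofReal ((edist (p : X × X).1 (p : X × X).2).toReal - (t' : ℝ)) ≤
            (edist x (p : X × X).2 + ENNReal.ofReal ((edist (p : X × X).1 (p : X × X).2).toReal - (t : ℝ))) + edist (t : ℝ) (t' : ℝ) := by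
          rw [add_assoc]
          refine add_le_add_right ?_ _
          have h3 := ofReal_lip ((edist (p : X × X).1 (p : X × X).2).toReal - (t' : ℝ)) ((edist (p : X × X).1 (p : X × X).2).toReal - (t : ℝ))
          rwa [habs] at h3
        rw [hbase]
        exact (le_min ((min_le_left _ _).trans h1) ((min_le_right _ _).trans h2)).trans_eq
          (min_add_add_right _ _ _)
      · have : sglueBase S (Sum.inr ⟨p, t⟩) (Sum.inr ⟨p', t'⟩) = ⊤ := by simp [sglueBase, h]
        rw [this, add_top]; exact le_top

lemma distToX_rel (hfin : ∀ p : S, edist (p : X × X).1 (p : X × X).2 ≠ ⊤) (x : X) :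
    ∀ a b : SGlueSpace S, sglueRel S a b → distToX x a = distToX x b := by
  rintro a b ⟨q, (⟨rfl, rfl⟩ | ⟨rfl, rfl⟩)⟩
  · have hE : ENNReal.ofReal ((edist (q : X × X).1 (q : X × X).2).toReal)
        = edist (q : X × X).1 (q : X × X).2 := ENNReal.ofReal_toReal (hfin q)
    show edist x (q : X × X).1 = min (edist x (q : X × X).1 + ENNReal.ofReal ((0 : ℝ)))
        (edist x (q : X × X).2 +
          ENNReal.ofReal ((edist (q : X × X).1 (q : X × X).2).toReal - (0 : ℝ)))
    rw [ENNReal.ofReal_zero, add_zero, sub_zero, hE]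
    refine (min_eq_left ?_).symm
    calc edist x (q : X × X).1 ≤ edist x (q : X × X).2 + edist (q : X × X).2 (q : X × X).1 :=
          edist_triangle _ _ _
      _ = _ := by rw [edist_comm (q : X × X).2 (q : X × X).1]
  · have hE : ENNReal.ofReal ((edist (q : X × X).1 (q : X × X).2).toReal)
        = edist (q : X × X).1 (q : X × X).2 := ENNReal.ofReal_toReal (hfin q)
    show edist x (q : X × X).2 = min
        (edist x (q : X × X).1 + ENNReal.ofReal ((edist (q : X × X).1 (q : X × X).2).toReal))
        (edist x (q : X × X).2 +
          ENNReal.ofReal ((edist (q : X × X).1 (q : X × X).2).toReal -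
            (edist (q : X × X).1 (q : X × X).2).toReal))
    rw [sub_self, ENNReal.ofReal_zero, add_zero, hE]
    exact (min_eq_right (edist_triangle _ _ _)).symm

lemma distToX_le_sglueDist (hfin : ∀ p : S, edist (p : X × X).1 (p : X × X).2 ≠ ⊤)
    (x : X) (b : SGlueSpace S) : distToX x b ≤ sglueDist S (Sum.inl x) b := by
  have h := le_sglueDist (F := distToX x) (distToX_lip x) (distToX_rel hfin x) (Sum.inl x) b
  have h0 : distToX (S := S) x (Sum.inl x) = edist x x := rfl
  rwa [h0, edist_self, zero_add] at h

end Potentials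


section Computations

lemma min_min_self {α : Type*} [LinearOrder α] (a b : α) : min (min a b) a = min a b := by
  rw [min_comm, ← min_assoc, min_self]

lemma min_min_self' {α : Type*} [LinearOrder α] (a b : α) : min (min a b) b = min a b := by
  rw [min_assoc, min_self]

lemma ofReal_abs_lip (w u v : ℝ) :
    ENNReal.ofReal |u - w| ≤ ENNReal.ofReal |v - w| + edist v u := by
  rw [edist_dist, Real.dist_eq]
  refine le_trans (ENNReal.ofReal_le_ofReal ?_) ENNReal.ofReal_add_le
  cases abs_cases (u - w) <;> cases abs_cases (v - w) <;> cases abs_cases (v - u) <;> linarith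

def zeroPt (p : S) : Set.Icc (0 : ℝ) (edist (p : X × X).1 (p : X × X).2).toReal :=
  ⟨0, Set.left_mem_Icc.mpr ENNReal.toReal_nonneg⟩

def endPt (p : S) : Set.Icc (0 : ℝ) (edist (p : X × X).1 (p : X × X).2).toReal :=
  ⟨(edist (p : X × X).1 (p : X × X).2).toReal, Set.right_mem_Icc.mpr ENNReal.toReal_nonneg⟩

lemma distToX_inl (x z : X) : distToX (S := S) x (Sum.inl z) = edist x z := rfl

lemma distToX_int (x : X) (p : S) (t : Set.Icc (0 : ℝ) (edist (p : X × X).1 (p : X × X).2).toReal) :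
    distToX x (Sum.inr ⟨p, t⟩) =
      min (edist x (p : X × X).1 + ENNReal.ofReal (t : ℝ))
        (edist x (p : X × X).2 + ENNReal.ofReal ((edist (p : X × X).1 (p : X × X).2).toReal - (t : ℝ))) := rfl

lemma sglueDist_zero_fst (p : S) :
    sglueDist S (Sum.inl (p : X × X).1) (Sum.inr ⟨p, zeroPt p⟩) = 0 :=
  sglueDist_eq_zero_of_eqvGen (Relation.EqvGen.rel _ _ ⟨p, Or.inl ⟨rfl, rfl⟩⟩)

lemma sglueDist_zero_snd (p : S) :
    sglueDist S (Sum.inl (p : X × X).2) (Sum.inr ⟨p, endPt p⟩) = 0 :=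
  sglueDist_eq_zero_of_eqvGen (Relation.EqvGen.rel _ _ ⟨p, Or.inr ⟨rfl, rfl⟩⟩)

lemma sglueBase_int (p : S) (t t' : Set.Icc (0 : ℝ) (edist (p : X × X).1 (p : X × X).2).toReal) :
    sglueBase S (Sum.inr ⟨p, t⟩) (Sum.inr ⟨p, t'⟩) = ENNReal.ofReal |(t : ℝ) - (t' : ℝ)| := by
  have h : sglueBase S (Sum.inr ⟨p, t⟩) (Sum.inr ⟨p, t'⟩) = edist (t : ℝ) (t' : ℝ) := by
    simp [sglueBase]
  rw [h, edist_dist, Real.dist_eq]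

lemma sglueDist_int_int_le (p : S) (t t' : Set.Icc (0 : ℝ) (edist (p : X × X).1 (p : X × X).2).toReal) :
    sglueDist S (Sum.inr ⟨p, t⟩) (Sum.inr ⟨p, t'⟩) ≤ ENNReal.ofReal |(t : ℝ) - (t' : ℝ)| :=
  (sglueDist_le_base _ _).trans_eq (sglueBase_int p t t')

lemma sglueDist_fst_le (p : S) (t : Set.Icc (0 : ℝ) (edist (p : X × X).1 (p : X × X).2).toReal) :
    sglueDist S (Sum.inl (p : X × X).1) (Sum.inr ⟨p, t⟩) ≤ ENNReal.ofReal (t : ℝ) := by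
  have h := sglueDist_triangle_base (Sum.inl (p : X × X).1) (Sum.inr ⟨p, zeroPt p⟩)
    (Sum.inr ⟨p, t⟩)
  rw [sglueDist_zero_fst, zero_add, sglueBase_int] at h
  refine h.trans_eq ?_
  congr 1
  show |(0 : ℝ) - (t : ℝ)| = (t : ℝ)
  rw [abs_sub_comm, sub_zero, abs_of_nonneg t.2.1]

lemma sglueDist_snd_le (p : S) (t : Set.Icc (0 : ℝ) (edist (p : X × X).1 (p : X × X).2).toReal) :
    sglueDist S (Sum.inl (p : X × X).2) (Sum.inr ⟨p, t⟩) ≤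
      ENNReal.ofReal ((edist (p : X × X).1 (p : X × X).2).toReal - (t : ℝ)) := by
  have h := sglueDist_triangle_base (Sum.inl (p : X × X).2) (Sum.inr ⟨p, endPt p⟩)
    (Sum.inr ⟨p, t⟩)
  rw [sglueDist_zero_snd, zero_add, sglueBase_int] at h
  refine h.trans_eq ?_
  congr 1
  show |(edist (p : X × X).1 (p : X × X).2).toReal - (t : ℝ)| = (edist (p : X × X).1 (p : X × X).2).toReal - (t : ℝ)
  rw [abs_of_nonneg (sub_nonneg.mpr t.2.2)]

lemma sglueDist_inl_inl_le (x y : X) : sglueDist S (Sum.inl x) (Sum.inl y) ≤ edist x y :=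
  (sglueDist_le_base _ _).trans_eq (by simp [sglueBase])

lemma sglueDist_inl_inl (hfin : ∀ p : S, edist (p : X × X).1 (p : X × X).2 ≠ ⊤) (x y : X) :
    sglueDist S (Sum.inl x) (Sum.inl y) = edist x y :=
  le_antisymm (sglueDist_inl_inl_le x y) (distToX_le_sglueDist hfin x (Sum.inl y))

lemma sglueDist_inl_int_le (x : X) (p : S) (t : Set.Icc (0 : ℝ) (edist (p : X × X).1 (p : X × X).2).toReal) :
    sglueDist S (Sum.inl x) (Sum.inr ⟨p, t⟩) ≤ distToX x (Sum.inr ⟨p, t⟩) := by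
  rw [distToX_int]
  refine le_min ?_ ?_
  · exact (sglueDist_triangle _ (Sum.inl (p : X × X).1) _).trans
      (add_le_add (sglueDist_inl_inl_le _ _) (sglueDist_fst_le p t))
  · exact (sglueDist_triangle _ (Sum.inl (p : X × X).2) _).trans
      (add_le_add (sglueDist_inl_inl_le _ _) (sglueDist_snd_le p t))

lemma sglueDist_inl_int (hfin : ∀ p : S, edist (p : X × X).1 (p : X × X).2 ≠ ⊤)
    (x : X) (p : S) (t : Set.Icc (0 : ℝ) (edist (p : X × X).1 (p : X × X).2).toReal) :
    sglueDist S (Sum.inl x) (Sum.inr ⟨p, t⟩) = distToX x (Sum.inr ⟨p, t⟩) :=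
  le_antisymm (sglueDist_inl_int_le x p t) (distToX_le_sglueDist hfin x _)

end Computations


section IntPotential

lemma lip_min {f g : SGlueSpace S → ℝ≥0∞}
    (hf : ∀ a b, f b ≤ f a + sglueBase S a b) (hg : ∀ a b, g b ≤ g a + sglueBase S a b) :
    ∀ a b, min (f b) (g b) ≤ min (f a) (g a) + sglueBase S a b := fun a b =>
  (le_min ((min_le_left _ _).trans (hf a b)) ((min_le_right _ _).trans (hg a b))).trans_eq
    (min_add_add_right _ _ _)

lemma lip_const_add (c : ℝ≥0∞) {f : SGlueSpace S → ℝ≥0∞}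
    (hf : ∀ a b, f b ≤ f a + sglueBase S a b) :
    ∀ a b, c + f b ≤ (c + f a) + sglueBase S a b := fun a b => by
  rw [add_assoc]
  exact add_le_add_right (hf a b) c

open Classical in
noncomputable def intG (p : S) (t : ℝ) : SGlueSpace S → ℝ≥0∞
  | Sum.inl _ => ⊤
  | Sum.inr ⟨p', t'⟩ => if p' = p then ENNReal.ofReal |(t' : ℝ) - t| else ⊤

lemma intG_inl (p : S) (t : ℝ) (z : X) : intG p t (Sum.inl z) = ⊤ := rfl

open Classical in
lemma intG_int (p : S) (t : ℝ) (p' : S)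
    (t' : Set.Icc (0 : ℝ) (edist (p' : X × X).1 (p' : X × X).2).toReal) :
    intG p t (Sum.inr ⟨p', t'⟩) = if p' = p then ENNReal.ofReal |(t' : ℝ) - t| else ⊤ := by
  simp [intG]


lemma zeroPt_coe (q : S) : ((zeroPt q : Set.Icc (0:ℝ) (edist (q : X × X).1 (q : X × X).2).toReal)) = (0 : ℝ) := rfl

lemma endPt_coe (q : S) : ((endPt q : Set.Icc (0:ℝ) (edist (q : X × X).1 (q : X × X).2).toReal)) = ((edist (q : X × X).1 (q : X × X).2).toReal : ℝ) := rfl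

lemma distToX_zeroPt_fst (q : S) :
    distToX (S := S) (q : X × X).1 (Sum.inr ⟨q, zeroPt q⟩) = 0 := by
  rw [distToX_int, zeroPt_coe, edist_self, ENNReal.ofReal_zero, add_zero]
  exact min_eq_left zero_le

lemma distToX_zeroPt_snd (hfin : ∀ p : S, edist (p : X × X).1 (p : X × X).2 ≠ ⊤) (q : S) :
    distToX (S := S) (q : X × X).2 (Sum.inr ⟨q, zeroPt q⟩) = edist (q : X × X).1 (q : X × X).2 := by
  rw [distToX_int, zeroPt_coe, edist_self, ENNReal.ofReal_zero, add_zero, sub_zero, zero_add,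
    ENNReal.ofReal_toReal (hfin q), edist_comm (q : X × X).2 (q : X × X).1, min_self]

lemma distToX_endPt_fst (hfin : ∀ p : S, edist (p : X × X).1 (p : X × X).2 ≠ ⊤) (q : S) :
    distToX (S := S) (q : X × X).1 (Sum.inr ⟨q, endPt q⟩) = edist (q : X × X).1 (q : X × X).2 := by
  rw [distToX_int, endPt_coe, edist_self, sub_self, ENNReal.ofReal_zero, add_zero, zero_add,
    ENNReal.ofReal_toReal (hfin q), min_self]

lemma distToX_endPt_snd (q : S) :
    distToX (S := S) (q : X × X).2 (Sum.inr ⟨q, endPt q⟩) = 0 := by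
  rw [distToX_int, endPt_coe, edist_self, sub_self, ENNReal.ofReal_zero, add_zero]
  exact min_eq_right zero_le

lemma intG_lip (p : S) (t : ℝ) :
    ∀ a b : SGlueSpace S, intG p t b ≤ intG p t a + sglueBase S a b := by
  intro a b
  cases b with
  | inl z =>
    cases a with
    | inl z' => rw [intG_inl, intG_inl, top_add]
    | inr q =>
      obtain ⟨p', t'⟩ := q
      have hb : sglueBase S (Sum.inr ⟨p', t'⟩) (Sum.inl z) = ⊤ := by simp [sglueBase]
      rw [hb, add_top]; exact le_top
  | inr q =>
    obtain ⟨p', t'⟩ := q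
    cases a with
    | inl z' =>
      have hb : sglueBase S (Sum.inl z') (Sum.inr ⟨p', t'⟩) = ⊤ := by simp [sglueBase]
      rw [hb, add_top]; exact le_top
    | inr q' =>
      obtain ⟨p'', t''⟩ := q'
      by_cases hpp : p'' = p'
      · subst hpp
        have hb : sglueBase S (Sum.inr ⟨p'', t''⟩) (Sum.inr ⟨p'', t'⟩)
            = edist (t'' : ℝ) (t' : ℝ) := by simp [sglueBase]
        rw [hb, intG_int, intG_int]
        by_cases h : p'' = p
        · rw [if_pos h, if_pos h]
          exact ofReal_abs_lip t (t' : ℝ) (t'' : ℝ)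
        · rw [if_neg h, if_neg h, top_add]
      · have hb : sglueBase S (Sum.inr ⟨p'', t''⟩) (Sum.inr ⟨p', t'⟩) = ⊤ := by
          simp [sglueBase, hpp]
        rw [hb, add_top]; exact le_top

noncomputable def intF (p : S) (t : ℝ) (b : SGlueSpace S) : ℝ≥0∞ :=
  min (min (ENNReal.ofReal t + distToX (p : X × X).1 b)
      (ENNReal.ofReal ((edist (p : X × X).1 (p : X × X).2).toReal - t) + distToX (p : X × X).2 b))
    (intG p t b)

lemma intF_lip (p : S) (t : ℝ) :
    ∀ a b : SGlueSpace S, intF p t b ≤ intF p t a + sglueBase S a b :=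
  lip_min (lip_min (lip_const_add _ (distToX_lip _)) (lip_const_add _ (distToX_lip _)))
    (intG_lip p t)

lemma intF_rel (hfin : ∀ p : S, edist (p : X × X).1 (p : X × X).2 ≠ ⊤) (p : S) (t : ℝ)
    (ht0 : 0 ≤ t) (htL : t ≤ (edist (p : X × X).1 (p : X × X).2).toReal) :
    ∀ a b : SGlueSpace S, sglueRel S a b → intF p t a = intF p t b := by
  have hE : ENNReal.ofReal (edist (p : X × X).1 (p : X × X).2).toReal = edist (p : X × X).1 (p : X × X).2 :=
    ENNReal.ofReal_toReal (hfin p)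
  rintro a b ⟨q, (⟨rfl, rfl⟩ | ⟨rfl, rfl⟩)⟩
  · by_cases hq : q = p
    · subst hq
      unfold intF
      rw [show Sum.inr (⟨q, ⟨0, Set.left_mem_Icc.mpr ENNReal.toReal_nonneg⟩⟩ :
        (p : S) × Set.Icc (0:ℝ) (edist (p : X × X).1 (p : X × X).2).toReal)
        = Sum.inr ⟨q, zeroPt q⟩ from rfl]
      rw [intG_inl, intG_int, if_pos rfl]
      rw [distToX_inl, distToX_inl, distToX_zeroPt_fst, distToX_zeroPt_snd hfin,
        edist_self, add_zero, edist_comm (q : X × X).2 (q : X × X).1,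
        show |((zeroPt q : Set.Icc (0:ℝ) (edist (q : X × X).1 (q : X × X).2).toReal) : ℝ) - t|
          = t by rw [zeroPt_coe, abs_sub_comm, sub_zero, abs_of_nonneg ht0],
        edist_comm (q : X × X).1 (q : X × X).2]
      rw [min_eq_left (le_top : min (ENNReal.ofReal t) _ ≤ ⊤)]
      exact (min_min_self _ _).symm
    · have e1 := distToX_rel hfin (p : X × X).1 _ _ ⟨q, Or.inl ⟨rfl, rfl⟩⟩
      have e2 := distToX_rel hfin (p : X × X).2 _ _ ⟨q, Or.inl ⟨rfl, rfl⟩⟩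
      unfold intF
      rw [intG_inl, intG_int, if_neg hq, e1, e2]
  · by_cases hq : q = p
    · subst hq
      unfold intF
      rw [show Sum.inr (⟨q, ⟨(edist (q : X × X).1 (q : X × X).2).toReal,
        Set.right_mem_Icc.mpr ENNReal.toReal_nonneg⟩⟩ :
        (p : S) × Set.Icc (0:ℝ) (edist (p : X × X).1 (p : X × X).2).toReal)
        = Sum.inr ⟨q, endPt q⟩ from rfl]
      rw [intG_inl, intG_int, if_pos rfl]
      rw [distToX_inl, distToX_inl, distToX_endPt_fst hfin, distToX_endPt_snd,
        edist_self, add_zero,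
        show |((endPt q : Set.Icc (0:ℝ) (edist (q : X × X).1 (q : X × X).2).toReal) : ℝ) - t|
          = (edist (q : X × X).1 (q : X × X).2).toReal - t by
            rw [endPt_coe, abs_of_nonneg (sub_nonneg.mpr htL)]]
      rw [min_eq_left (le_top :
        min _ (ENNReal.ofReal ((edist (q : X × X).1 (q : X × X).2).toReal - t)) ≤ ⊤)]
      exact (min_min_self' _ _).symm
    · have e1 := distToX_rel hfin (p : X × X).1 _ _ ⟨q, Or.inr ⟨rfl, rfl⟩⟩
      have e2 := distToX_rel hfin (p : X × X).2 _ _ ⟨q, Or.inr ⟨rfl, rfl⟩⟩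
      unfold intF
      rw [intG_inl, intG_int, if_neg hq, e1, e2]

end IntPotential


section LowerBounds

variable (hfin : ∀ p : S, edist (p : X × X).1 (p : X × X).2 ≠ ⊤)

lemma intF_le_sglueDist (hfin : ∀ p : S, edist (p : X × X).1 (p : X × X).2 ≠ ⊤)
    (p : S) (t : Set.Icc (0 : ℝ) (edist (p : X × X).1 (p : X × X).2).toReal) (b : SGlueSpace S) :
    intF p (t : ℝ) b ≤ sglueDist S (Sum.inr ⟨p, t⟩) b := by
  have h := le_sglueDist (F := intF p (t : ℝ)) (intF_lip p _) (intF_rel hfin p _ t.2.1 t.2.2)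
    (Sum.inr ⟨p, t⟩) b
  have h0 : intF p (t : ℝ) (Sum.inr ⟨p, t⟩) = 0 := by
    refine le_antisymm ((min_le_right _ _).trans ?_) zero_le
    rw [intG_int, if_pos rfl, sub_self, abs_zero, ENNReal.ofReal_zero]
  rwa [h0, zero_add] at h

lemma sglueDist_int_int_ge (hfin : ∀ p : S, edist (p : X × X).1 (p : X × X).2 ≠ ⊤)
    (p : S) (t t' : Set.Icc (0 : ℝ) (edist (p : X × X).1 (p : X × X).2).toReal) :
    ENNReal.ofReal |(t : ℝ) - (t' : ℝ)| ≤
      sglueDist S (Sum.inr ⟨p, t⟩) (Sum.inr ⟨p, t'⟩) := by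
  refine le_trans ?_ (intF_le_sglueDist hfin p t _)
  unfold intF
  have hE : ENNReal.ofReal (edist (p : X × X).1 (p : X × X).2).toReal
      = edist (p : X × X).1 (p : X × X).2 := ENNReal.ofReal_toReal (hfin p)
  have habsLe : |(t : ℝ) - (t' : ℝ)| ≤ (edist (p : X × X).1 (p : X × X).2).toReal := by
    rcases abs_cases ((t : ℝ) - (t' : ℝ)) with ⟨h1, _⟩ | ⟨h1, _⟩ <;>
      rw [h1] <;> [linarith [t.2.2, t'.2.1]; linarith [t.2.1, t'.2.2]]
  have hL1 : ENNReal.ofReal |(t : ℝ) - (t' : ℝ)| ≤ edist (p : X × X).1 (p : X × X).2 := by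
    exact le_trans (ENNReal.ofReal_le_ofReal habsLe) hE.le
  refine le_min (le_min ?_ ?_) ?_
  · rw [distToX_int, edist_self, zero_add, ← min_add_add_left]
    refine le_min ?_ ?_
    · refine le_trans (ENNReal.ofReal_le_ofReal ?_) (ENNReal.ofReal_add t.2.1 t'.2.1).le
      rcases abs_cases ((t : ℝ) - (t' : ℝ)) with ⟨h1, _⟩ | ⟨h1, _⟩ <;>
        rw [h1] <;> [linarith [t'.2.1]; linarith [t.2.1]]
    · exact hL1.trans (le_self_add.trans le_add_self)
  · rw [distToX_int, edist_self, zero_add, edist_comm (p : X × X).2 (p : X × X).1,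
      ← min_add_add_left]
    refine le_min ?_ ?_
    · exact hL1.trans (le_self_add.trans le_add_self)
    · refine le_trans (ENNReal.ofReal_le_ofReal ?_)
        (ENNReal.ofReal_add (sub_nonneg.mpr t.2.2) (sub_nonneg.mpr t'.2.2)).le
      rcases abs_cases ((t : ℝ) - (t' : ℝ)) with ⟨h1, _⟩ | ⟨h1, _⟩ <;>
        rw [h1] <;> [linarith [t.2.2]; linarith [t'.2.2]]
  · rw [intG_int, if_pos rfl, abs_sub_comm]

lemma sglueDist_cross_ge (hfin : ∀ p : S, edist (p : X × X).1 (p : X × X).2 ≠ ⊤)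
    (p p' : S) (hne : p' ≠ p) (t : Set.Icc (0 : ℝ) (edist (p : X × X).1 (p : X × X).2).toReal)
    (t' : Set.Icc (0 : ℝ) (edist (p' : X × X).1 (p' : X × X).2).toReal) :
    min (ENNReal.ofReal (t : ℝ) + distToX (p : X × X).1 (Sum.inr ⟨p', t'⟩))
      (ENNReal.ofReal ((edist (p : X × X).1 (p : X × X).2).toReal - (t : ℝ)) + distToX (p : X × X).2 (Sum.inr ⟨p', t'⟩)) ≤
      sglueDist S (Sum.inr ⟨p, t⟩) (Sum.inr ⟨p', t'⟩) := by
  refine le_trans ?_ (intF_le_sglueDist hfin p t _)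
  unfold intF
  rw [intG_int, if_neg hne]
  exact le_min le_rfl le_top

end LowerBounds


section GX

lemma sglueDist_int_int (hfin : ∀ p : S, edist (p : X × X).1 (p : X × X).2 ≠ ⊤)
    (p : S) (t t' : Set.Icc (0 : ℝ) (edist (p : X × X).1 (p : X × X).2).toReal) :
    sglueDist S (Sum.inr ⟨p, t⟩) (Sum.inr ⟨p, t'⟩) = ENNReal.ofReal |(t : ℝ) - (t' : ℝ)| :=
  le_antisymm (sglueDist_int_int_le p t t') (sglueDist_int_int_ge hfin p t t')

noncomputable def gX : SGlueSpace S → ℝ≥0∞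
  | Sum.inl _ => 0
  | Sum.inr ⟨p, t⟩ =>
      min (ENNReal.ofReal (t : ℝ))
        (ENNReal.ofReal ((edist (p : X × X).1 (p : X × X).2).toReal - (t : ℝ)))

lemma gX_inl (z : X) : gX (S := S) (Sum.inl z) = 0 := rfl

lemma gX_int (p : S) (t : Set.Icc (0 : ℝ) (edist (p : X × X).1 (p : X × X).2).toReal) :
    gX (Sum.inr ⟨p, t⟩) =
      min (ENNReal.ofReal (t : ℝ)) (ENNReal.ofReal ((edist (p : X × X).1 (p : X × X).2).toReal - (t : ℝ))) := rfl

lemma gX_lip : ∀ a b : SGlueSpace S, gX b ≤ gX a + sglueBase S a b := by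
  intro a b
  cases b with
  | inl z => rw [gX_inl]; exact zero_le
  | inr q =>
    obtain ⟨p, t⟩ := q
    cases a with
    | inl z' =>
      have hb : sglueBase S (Sum.inl z') (Sum.inr ⟨p, t⟩) = ⊤ := by simp [sglueBase]
      rw [hb, add_top]; exact le_top
    | inr q' =>
      obtain ⟨p', t'⟩ := q'
      by_cases hpp : p' = p
      · subst hpp
        have hb : sglueBase S (Sum.inr ⟨p', t'⟩) (Sum.inr ⟨p', t⟩)
            = edist (t' : ℝ) (t : ℝ) := by simp [sglueBase]
        rw [hb, gX_int, gX_int]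
        have habs : edist ((edist (p' : X × X).1 (p' : X × X).2).toReal - (t : ℝ))
            ((edist (p' : X × X).1 (p' : X × X).2).toReal - (t' : ℝ))
            = edist (t' : ℝ) (t : ℝ) := by
          rw [edist_dist, edist_dist, Real.dist_eq, Real.dist_eq]
          congr 1
          rw [show (edist (p' : X × X).1 (p' : X × X).2).toReal - (t : ℝ) -
            ((edist (p' : X × X).1 (p' : X × X).2).toReal - (t' : ℝ)) = (t' : ℝ) - (t : ℝ) by ring]
        have h1 : ENNReal.ofReal (t : ℝ) ≤ ENNReal.ofReal (t' : ℝ) + edist (t' : ℝ) (t : ℝ) := by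
          have h4 := ofReal_lip (t : ℝ) (t' : ℝ)
          rwa [edist_comm (t : ℝ) (t' : ℝ)] at h4
        have h2 : ENNReal.ofReal ((edist (p' : X × X).1 (p' : X × X).2).toReal - (t : ℝ)) ≤
            ENNReal.ofReal ((edist (p' : X × X).1 (p' : X × X).2).toReal - (t' : ℝ))
              + edist (t' : ℝ) (t : ℝ) := by
          have h3 := ofReal_lip ((edist (p' : X × X).1 (p' : X × X).2).toReal - (t : ℝ))
            ((edist (p' : X × X).1 (p' : X × X).2).toReal - (t' : ℝ))
          rwa [habs] at h3
        exact (le_min ((min_le_left _ _).trans h1) ((min_le_right _ _).trans h2)).trans_eq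
          (min_add_add_right _ _ _)
      · have hb : sglueBase S (Sum.inr ⟨p', t'⟩) (Sum.inr ⟨p, t⟩) = ⊤ := by
          simp [sglueBase, hpp]
        rw [hb, add_top]; exact le_top

lemma gX_rel : ∀ a b : SGlueSpace S, sglueRel S a b → gX a = gX b := by
  rintro a b ⟨q, (⟨rfl, rfl⟩ | ⟨rfl, rfl⟩)⟩
  · rw [show Sum.inr (⟨q, ⟨0, Set.left_mem_Icc.mpr ENNReal.toReal_nonneg⟩⟩ :
      (p : S) × Set.Icc (0:ℝ) (edist (p : X × X).1 (p : X × X).2).toReal)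
      = Sum.inr ⟨q, zeroPt q⟩ from rfl, gX_inl, gX_int, zeroPt_coe, ENNReal.ofReal_zero]
    exact (min_eq_left zero_le).symm
  · rw [show Sum.inr (⟨q, ⟨(edist (q : X × X).1 (q : X × X).2).toReal,
      Set.right_mem_Icc.mpr ENNReal.toReal_nonneg⟩⟩ :
      (p : S) × Set.Icc (0:ℝ) (edist (p : X × X).1 (p : X × X).2).toReal)
      = Sum.inr ⟨q, endPt q⟩ from rfl, gX_inl, gX_int, endPt_coe, sub_self, ENNReal.ofReal_zero]
    exact (min_eq_right zero_le).symm

lemma gX_le_sglueDist_inl (x : X) (b : SGlueSpace S) :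
    gX b ≤ sglueDist S (Sum.inl x) b := by
  have h := le_sglueDist (F := gX) gX_lip gX_rel (Sum.inl x) b
  rwa [gX_inl, zero_add] at h

lemma exists_exit (a : SGlueSpace S) : ∃ x : X, sglueDist S a (Sum.inl x) ≤ gX a := by
  cases a with
  | inl z => exact ⟨z, by rw [sglueDist_self]; exact zero_le⟩
  | inr q =>
    obtain ⟨p, t⟩ := q
    rcases le_total (ENNReal.ofReal (t : ℝ))
      (ENNReal.ofReal ((edist (p : X × X).1 (p : X × X).2).toReal - (t : ℝ))) with h | h
    · refine ⟨(p : X × X).1, ?_⟩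
      rw [sglueDist_comm, gX_int, min_eq_left h]
      exact sglueDist_fst_le p t
    · refine ⟨(p : X × X).2, ?_⟩
      rw [sglueDist_comm, gX_int, min_eq_right h]
      exact sglueDist_snd_le p t

lemma sglueDist_cross_ge_gg (hfin : ∀ p : S, edist (p : X × X).1 (p : X × X).2 ≠ ⊤)
    (p p' : S) (hne : p' ≠ p) (t : Set.Icc (0 : ℝ) (edist (p : X × X).1 (p : X × X).2).toReal)
    (t' : Set.Icc (0 : ℝ) (edist (p' : X × X).1 (p' : X × X).2).toReal) :
    gX (Sum.inr ⟨p, t⟩) + gX (Sum.inr ⟨p', t'⟩) ≤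
      sglueDist S (Sum.inr ⟨p, t⟩) (Sum.inr ⟨p', t'⟩) := by
  refine le_trans ?_ (sglueDist_cross_ge hfin p p' hne t t')
  rw [gX_int, gX_int, distToX_int, distToX_int]
  have hW : ∀ x : X, min (ENNReal.ofReal (t' : ℝ)) (ENNReal.ofReal ((edist (p' : X × X).1 (p' : X × X).2).toReal - (t' : ℝ))) ≤
      min (edist x (p' : X × X).1 + ENNReal.ofReal (t' : ℝ))
        (edist x (p' : X × X).2 + ENNReal.ofReal ((edist (p' : X × X).1 (p' : X × X).2).toReal - (t' : ℝ))) :=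
    fun x => min_le_min le_add_self le_add_self
  refine le_min ?_ ?_
  · exact (add_le_add (min_le_left _ _) (hW (p : X × X).1))
  · exact (add_le_add (min_le_right _ _) (hW (p : X × X).2))

end GX


section Convex

lemma mid_pattern {a b c : SGlueSpace S} {u v : ℝ≥0∞}
    (hac : sglueDist S a c ≤ u) (hcb : sglueDist S c b ≤ v)
    (huv : u + v ≤ sglueDist S a b) (hu : u < sglueDist S a b) (hv : v < sglueDist S a b) :
    sglueDist S a c ≠ 0 ∧ sglueDist S c b ≠ 0 ∧
      sglueDist S a b = sglueDist S a c + sglueDist S c b := by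
  have htri := sglueDist_triangle a c b
  have heq : sglueDist S a b = sglueDist S a c + sglueDist S c b :=
    le_antisymm htri ((add_le_add hac hcb).trans huv)
  refine ⟨?_, ?_, heq⟩
  · intro hz
    rw [hz, zero_add] at heq
    exact absurd (heq.le.trans hcb) hv.not_ge
  · intro hz
    rw [hz, add_zero] at heq
    exact absurd (heq.le.trans hac) hu.not_ge

lemma normal_form (a : SGlueSpace S) :
    (∃ x : X, sglueDist S a (Sum.inl x) = 0) ∨
    (∃ (p : S) (t : Set.Icc (0 : ℝ) (edist (p : X × X).1 (p : X × X).2).toReal),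
      a = Sum.inr ⟨p, t⟩ ∧ 0 < (t : ℝ) ∧ (t : ℝ) < (edist (p : X × X).1 (p : X × X).2).toReal) := by
  cases a with
  | inl x => exact Or.inl ⟨x, sglueDist_self _⟩
  | inr q =>
    obtain ⟨p, t⟩ := q
    by_cases h0 : (t : ℝ) = 0
    · refine Or.inl ⟨(p : X × X).1, ?_⟩
      have ht : (Sum.inr ⟨p, t⟩ : SGlueSpace S) = Sum.inr ⟨p, zeroPt p⟩ := by
        exact congrArg Sum.inr (congrArg (Sigma.mk p) (Subtype.ext h0))
      rw [ht, sglueDist_comm, sglueDist_zero_fst]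
    · by_cases hL : (t : ℝ) = (edist (p : X × X).1 (p : X × X).2).toReal
      · refine Or.inl ⟨(p : X × X).2, ?_⟩
        have ht : (Sum.inr ⟨p, t⟩ : SGlueSpace S) = Sum.inr ⟨p, endPt p⟩ := by
          exact congrArg Sum.inr (congrArg (Sigma.mk p) (Subtype.ext hL))
        rw [ht, sglueDist_comm, sglueDist_zero_snd]
      · exact Or.inr ⟨p, t, rfl, lt_of_le_of_ne t.2.1 (Ne.symm h0), lt_of_le_of_ne t.2.2 hL⟩

lemma flip {a b : SGlueSpace S}
    (h : ∃ c, sglueDist S b c ≠ 0 ∧ sglueDist S c a ≠ 0 ∧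
      sglueDist S b a = sglueDist S b c + sglueDist S c a) :
    ∃ c, sglueDist S a c ≠ 0 ∧ sglueDist S c b ≠ 0 ∧
      sglueDist S a b = sglueDist S a c + sglueDist S c b := by
  obtain ⟨c, h1, h2, h3⟩ := h
  refine ⟨c, ?_, ?_, ?_⟩
  · rw [sglueDist_comm]; exact h2
  · rw [sglueDist_comm]; exact h1
  · rw [sglueDist_comm a b, h3, sglueDist_comm b c, sglueDist_comm c a, add_comm]

lemma transfer {a a' b b' : SGlueSpace S} (ha : sglueDist S a a' = 0)
    (hb : sglueDist S b b' = 0)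
    (h : ∃ c, sglueDist S a' c ≠ 0 ∧ sglueDist S c b' ≠ 0 ∧
      sglueDist S a' b' = sglueDist S a' c + sglueDist S c b') :
    ∃ c, sglueDist S a c ≠ 0 ∧ sglueDist S c b ≠ 0 ∧
      sglueDist S a b = sglueDist S a c + sglueDist S c b := by
  obtain ⟨c, h1, h2, h3⟩ := h
  have e1 : sglueDist S a c = sglueDist S a' c := sglueDist_congr_left ha
  have e2 : sglueDist S c b = sglueDist S c b' := sglueDist_congr_right hb
  have e3 : sglueDist S a b = sglueDist S a' b' := by
    rw [sglueDist_congr_left ha, sglueDist_congr_right hb]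
  exact ⟨c, by rw [e1]; exact h1, by rw [e2]; exact h2, by rw [e3, e1, e2, h3]⟩

lemma sglueDist_transfer {a a' b b' : SGlueSpace S} (ha : sglueDist S a a' = 0)
    (hb : sglueDist S b b' = 0) : sglueDist S a b = sglueDist S a' b' := by
  rw [sglueDist_congr_left ha, sglueDist_congr_right hb]

lemma case_ll (hfin : ∀ p : S, edist (p : X × X).1 (p : X × X).2 ≠ ⊤)
    (hSfull : ∀ x x' : X, x ≠ x' → edist x x' ≠ ⊤ → ¬ JoinedBySegment x x' → (x, x') ∈ S)
    (x y : X) (h0 : sglueDist S (Sum.inl x) (Sum.inl y) ≠ 0)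
    (htop : sglueDist S (Sum.inl x) (Sum.inl y) ≠ ⊤) :
    ∃ c, sglueDist S (Sum.inl x) c ≠ 0 ∧ sglueDist S c (Sum.inl y) ≠ 0 ∧
      sglueDist S (Sum.inl x) (Sum.inl y) =
        sglueDist S (Sum.inl x) c + sglueDist S c (Sum.inl y) := by
  have hD : sglueDist S (Sum.inl x) (Sum.inl y) = edist x y := sglueDist_inl_inl hfin x y
  rw [hD] at h0 htop
  have hLr : 0 < (edist x y).toReal := ENNReal.toReal_pos h0 htop
  set Lr : ℝ := (edist x y).toReal with hLrdef
  have hofL : ENNReal.ofReal Lr = edist x y := ENNReal.ofReal_toReal htop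
  have hmem0 : (0 : ℝ) ∈ Set.Icc (0 : ℝ) Lr := Set.left_mem_Icc.mpr hLr.le
  have hmemh : Lr / 2 ∈ Set.Icc (0 : ℝ) Lr := ⟨by linarith, by linarith⟩
  have hmemL : Lr ∈ Set.Icc (0 : ℝ) Lr := Set.right_mem_Icc.mpr hLr.le
  have hhalf : ENNReal.ofReal (Lr / 2) + ENNReal.ofReal (Lr / 2) = edist x y := by
    rw [← ENNReal.ofReal_add (by linarith) (by linarith), add_halves, hofL]
  have hlt : ENNReal.ofReal (Lr / 2) < edist x y := by
    rw [← hofL]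
    exact (ENNReal.ofReal_lt_ofReal_iff hLr).mpr (by linarith)
  by_cases hseg : JoinedBySegment x y
  · obtain ⟨φ, hiso, hφ0, hφL⟩ := hseg
    have e1 : edist x (φ (Lr / 2)) = ENNReal.ofReal (Lr / 2) := by
      rw [← hφ0, hiso 0 hmem0 (Lr / 2) hmemh, edist_dist, Real.dist_eq]
      congr 1
      rw [zero_sub, abs_neg, abs_of_nonneg (by linarith)]
    have e2 : edist (φ (Lr / 2)) y = ENNReal.ofReal (Lr / 2) := by
      rw [← hφL, hiso (Lr / 2) hmemh Lr hmemL, edist_dist, Real.dist_eq]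
      congr 1
      rw [show Lr / 2 - Lr = -(Lr / 2) by ring, abs_neg, abs_of_nonneg (by linarith)]
    refine ⟨_, mid_pattern ((sglueDist_inl_inl_le _ _).trans_eq e1)
      ((sglueDist_inl_inl_le _ _).trans_eq e2) ?_ ?_ ?_⟩
    · rw [hD, ← hhalf]
    · rw [hD]; exact hlt
    · rw [hD]; exact hlt
  · have hxy : x ≠ y := fun he => h0 (by rw [he, edist_self])
    have hmemS : (x, y) ∈ S := hSfull x y hxy htop hseg
    have hac : sglueDist S (Sum.inl x)
        (Sum.inr ⟨⟨(x, y), hmemS⟩, ⟨Lr / 2, hmemh⟩⟩) ≤ ENNReal.ofReal (Lr / 2) :=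
      sglueDist_fst_le ⟨(x, y), hmemS⟩ ⟨Lr / 2, hmemh⟩
    have hcb : sglueDist S (Sum.inr ⟨⟨(x, y), hmemS⟩, ⟨Lr / 2, hmemh⟩⟩)
        (Sum.inl y) ≤ ENNReal.ofReal (Lr / 2) := by
      rw [sglueDist_comm]
      have h2 := sglueDist_snd_le (S := S) ⟨(x, y), hmemS⟩ ⟨Lr / 2, hmemh⟩
      refine h2.trans_eq ?_
      congr 1
      exact sub_half Lr
    refine ⟨_, mid_pattern hac hcb ?_ ?_ ?_⟩
    · rw [hD, ← hhalf]
    · rw [hD]; exact hlt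
    · rw [hD]; exact hlt

lemma case_li (hfin : ∀ p : S, edist (p : X × X).1 (p : X × X).2 ≠ ⊤)
    (x : X) (p : S) (t : Set.Icc (0 : ℝ) (edist (p : X × X).1 (p : X × X).2).toReal) (ht0 : 0 < (t : ℝ)) (htL : (t : ℝ) < (edist (p : X × X).1 (p : X × X).2).toReal)
    (htop : sglueDist S (Sum.inl x) (Sum.inr ⟨p, t⟩) ≠ ⊤) :
    ∃ c, sglueDist S (Sum.inl x) c ≠ 0 ∧ sglueDist S c (Sum.inr ⟨p, t⟩) ≠ 0 ∧
      sglueDist S (Sum.inl x) (Sum.inr ⟨p, t⟩) =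
        sglueDist S (Sum.inl x) c + sglueDist S c (Sum.inr ⟨p, t⟩) := by
  have hDmin : sglueDist S (Sum.inl x) (Sum.inr ⟨p, t⟩) =
      min (edist x (p : X × X).1 + ENNReal.ofReal (t : ℝ))
        (edist x (p : X × X).2 + ENNReal.ofReal ((edist (p : X × X).1 (p : X × X).2).toReal - (t : ℝ))) := by
    rw [sglueDist_inl_int hfin, distToX_int]
  rcases le_total (edist x (p : X × X).1 + ENNReal.ofReal (t : ℝ))
      (edist x (p : X × X).2 + ENNReal.ofReal ((edist (p : X × X).1 (p : X × X).2).toReal - (t : ℝ))) with hAB | hAB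
  · have hD : sglueDist S (Sum.inl x) (Sum.inr ⟨p, t⟩)
        = edist x (p : X × X).1 + ENNReal.ofReal (t : ℝ) := by
      rw [hDmin]; exact min_eq_left hAB
    rw [hD] at htop
    have he1 : edist x (p : X × X).1 ≠ ⊤ := fun h => htop (by rw [h, top_add])
    have hmem : (t : ℝ) / 2 ∈ Set.Icc (0 : ℝ) (edist (p : X × X).1 (p : X × X).2).toReal := ⟨by linarith, by linarith [t.2.2]⟩
    have hac : sglueDist S (Sum.inl x) (Sum.inr ⟨p, ⟨(t : ℝ) / 2, hmem⟩⟩) ≤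
        edist x (p : X × X).1 + ENNReal.ofReal ((t : ℝ) / 2) := by
      refine (sglueDist_triangle _ (Sum.inl (p : X × X).1) _).trans
        (add_le_add (sglueDist_inl_inl_le x _) ?_)
      exact sglueDist_fst_le p ⟨(t : ℝ) / 2, hmem⟩
    have hcb : sglueDist S (Sum.inr ⟨p, ⟨(t : ℝ) / 2, hmem⟩⟩) (Sum.inr ⟨p, t⟩) ≤
        ENNReal.ofReal ((t : ℝ) / 2) := by
      refine (sglueDist_int_int_le p _ t).trans_eq ?_
      congr 1
      show |(t : ℝ) / 2 - (t : ℝ)| = (t : ℝ) / 2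
      rw [show (t : ℝ) / 2 - (t : ℝ) = -((t : ℝ) / 2) by ring, abs_neg,
        abs_of_nonneg (by linarith)]
    have hhalf : ENNReal.ofReal ((t : ℝ) / 2) + ENNReal.ofReal ((t : ℝ) / 2)
        = ENNReal.ofReal (t : ℝ) := by
      rw [← ENNReal.ofReal_add (by linarith) (by linarith), add_halves]
    have hltt : ENNReal.ofReal ((t : ℝ) / 2) < ENNReal.ofReal (t : ℝ) :=
      (ENNReal.ofReal_lt_ofReal_iff ht0).mpr (by linarith)
    refine ⟨_, mid_pattern hac hcb ?_ ?_ ?_⟩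
    · rw [hD, add_assoc, hhalf]
    · rw [hD]
      exact ENNReal.add_lt_add_left he1 hltt
    · rw [hD]
      exact hltt.trans_le le_add_self
  · have hD : sglueDist S (Sum.inl x) (Sum.inr ⟨p, t⟩)
        = edist x (p : X × X).2 + ENNReal.ofReal ((edist (p : X × X).1 (p : X × X).2).toReal - (t : ℝ)) := by
      rw [hDmin]; exact min_eq_right hAB
    rw [hD] at htop
    have he2 : edist x (p : X × X).2 ≠ ⊤ := fun h => htop (by rw [h, top_add])
    have hmem : ((t : ℝ) + (edist (p : X × X).1 (p : X × X).2).toReal) / 2 ∈ Set.Icc (0 : ℝ) (edist (p : X × X).1 (p : X × X).2).toReal :=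
      ⟨by linarith [t.2.1], by linarith⟩
    have harith : (edist (p : X × X).1 (p : X × X).2).toReal - ((t : ℝ) + (edist (p : X × X).1 (p : X × X).2).toReal) / 2 = ((edist (p : X × X).1 (p : X × X).2).toReal - (t : ℝ)) / 2 := by ring
    have hac : sglueDist S (Sum.inl x) (Sum.inr ⟨p, ⟨((t : ℝ) + (edist (p : X × X).1 (p : X × X).2).toReal) / 2, hmem⟩⟩) ≤
        edist x (p : X × X).2 + ENNReal.ofReal (((edist (p : X × X).1 (p : X × X).2).toReal - (t : ℝ)) / 2) := by
      refine (sglueDist_triangle _ (Sum.inl (p : X × X).2) _).trans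
        (add_le_add (sglueDist_inl_inl_le x _) ?_)
      refine (sglueDist_snd_le p ⟨((t : ℝ) + (edist (p : X × X).1 (p : X × X).2).toReal) / 2, hmem⟩).trans_eq ?_
      congr 1
    have hcb : sglueDist S (Sum.inr ⟨p, ⟨((t : ℝ) + (edist (p : X × X).1 (p : X × X).2).toReal) / 2, hmem⟩⟩) (Sum.inr ⟨p, t⟩) ≤
        ENNReal.ofReal (((edist (p : X × X).1 (p : X × X).2).toReal - (t : ℝ)) / 2) := by
      refine (sglueDist_int_int_le p _ t).trans_eq ?_
      congr 1
      show |((t : ℝ) + (edist (p : X × X).1 (p : X × X).2).toReal) / 2 - (t : ℝ)| = ((edist (p : X × X).1 (p : X × X).2).toReal - (t : ℝ)) / 2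
      rw [show ((t : ℝ) + (edist (p : X × X).1 (p : X × X).2).toReal) / 2 - (t : ℝ) = ((edist (p : X × X).1 (p : X × X).2).toReal - (t : ℝ)) / 2 by ring,
        abs_of_nonneg (by linarith)]
    have hhalf : ENNReal.ofReal (((edist (p : X × X).1 (p : X × X).2).toReal - (t : ℝ)) / 2) + ENNReal.ofReal (((edist (p : X × X).1 (p : X × X).2).toReal - (t : ℝ)) / 2)
        = ENNReal.ofReal ((edist (p : X × X).1 (p : X × X).2).toReal - (t : ℝ)) := by
      rw [← ENNReal.ofReal_add (by linarith) (by linarith), add_halves]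
    have hltt : ENNReal.ofReal (((edist (p : X × X).1 (p : X × X).2).toReal - (t : ℝ)) / 2) < ENNReal.ofReal ((edist (p : X × X).1 (p : X × X).2).toReal - (t : ℝ)) :=
      (ENNReal.ofReal_lt_ofReal_iff (by linarith)).mpr (by linarith)
    refine ⟨_, mid_pattern hac hcb ?_ ?_ ?_⟩
    · rw [hD, add_assoc, hhalf]
    · rw [hD]
      exact ENNReal.add_lt_add_left he2 hltt
    · rw [hD]
      exact hltt.trans_le le_add_self

end Convex


section CaseII

lemma case_ii (hfin : ∀ p : S, edist (p : X × X).1 (p : X × X).2 ≠ ⊤)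
    (p p' : S) (t : Set.Icc (0 : ℝ) (edist (p : X × X).1 (p : X × X).2).toReal) (t' : Set.Icc (0 : ℝ) (edist (p' : X × X).1 (p' : X × X).2).toReal)
    (ht0 : 0 < (t : ℝ)) (htL : (t : ℝ) < (edist (p : X × X).1 (p : X × X).2).toReal)
    (ht0' : 0 < (t' : ℝ)) (htL' : (t' : ℝ) < (edist (p' : X × X).1 (p' : X × X).2).toReal)
    (h0 : sglueDist S (Sum.inr ⟨p, t⟩) (Sum.inr ⟨p', t'⟩) ≠ 0)
    (htop : sglueDist S (Sum.inr ⟨p, t⟩) (Sum.inr ⟨p', t'⟩) ≠ ⊤) :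
    ∃ c, sglueDist S (Sum.inr ⟨p, t⟩) c ≠ 0 ∧ sglueDist S c (Sum.inr ⟨p', t'⟩) ≠ 0 ∧
      sglueDist S (Sum.inr ⟨p, t⟩) (Sum.inr ⟨p', t'⟩) =
        sglueDist S (Sum.inr ⟨p, t⟩) c + sglueDist S c (Sum.inr ⟨p', t'⟩) := by
  by_cases hpp : p' = p
  · subst hpp
    have hD : sglueDist S (Sum.inr ⟨p', t⟩) (Sum.inr ⟨p', t'⟩)
        = ENNReal.ofReal |(t : ℝ) - (t' : ℝ)| := sglueDist_int_int hfin p' t t'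
    have hsub : (t : ℝ) - (t' : ℝ) ≠ 0 := by
      intro h
      exact h0 (by rw [hD, h, abs_zero, ENNReal.ofReal_zero])
    have habs : 0 < |(t : ℝ) - (t' : ℝ)| := abs_pos.mpr hsub
    have hmem : ((t : ℝ) + (t' : ℝ)) / 2 ∈ Set.Icc (0 : ℝ) (edist (p' : X × X).1 (p' : X × X).2).toReal :=
      ⟨by linarith, by linarith⟩
    have hac : sglueDist S (Sum.inr ⟨p', t⟩) (Sum.inr ⟨p', ⟨((t : ℝ) + (t' : ℝ)) / 2, hmem⟩⟩)
        ≤ ENNReal.ofReal (|(t : ℝ) - (t' : ℝ)| / 2) := by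
      refine (sglueDist_int_int_le p' _ _).trans_eq ?_
      congr 1
      show |(t : ℝ) - ((t : ℝ) + (t' : ℝ)) / 2| = |(t : ℝ) - (t' : ℝ)| / 2
      rw [show (t : ℝ) - ((t : ℝ) + (t' : ℝ)) / 2 = ((t : ℝ) - (t' : ℝ)) / 2 by ring,
        abs_div, abs_two]
    have hcb : sglueDist S (Sum.inr ⟨p', ⟨((t : ℝ) + (t' : ℝ)) / 2, hmem⟩⟩) (Sum.inr ⟨p', t'⟩)
        ≤ ENNReal.ofReal (|(t : ℝ) - (t' : ℝ)| / 2) := by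
      refine (sglueDist_int_int_le p' _ _).trans_eq ?_
      congr 1
      show |((t : ℝ) + (t' : ℝ)) / 2 - (t' : ℝ)| = |(t : ℝ) - (t' : ℝ)| / 2
      rw [show ((t : ℝ) + (t' : ℝ)) / 2 - (t' : ℝ) = ((t : ℝ) - (t' : ℝ)) / 2 by ring,
        abs_div, abs_two]
    have hhalf : ENNReal.ofReal (|(t : ℝ) - (t' : ℝ)| / 2)
        + ENNReal.ofReal (|(t : ℝ) - (t' : ℝ)| / 2) = ENNReal.ofReal |(t : ℝ) - (t' : ℝ)| := by
      rw [← ENNReal.ofReal_add (by positivity) (by positivity), add_halves]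
    have hltt : ENNReal.ofReal (|(t : ℝ) - (t' : ℝ)| / 2)
        < ENNReal.ofReal |(t : ℝ) - (t' : ℝ)| :=
      (ENNReal.ofReal_lt_ofReal_iff habs).mpr (by linarith)
    refine ⟨_, mid_pattern hac hcb ?_ ?_ ?_⟩
    · rw [hD, ← hhalf]
    · rw [hD]; exact hltt
    · rw [hD]; exact hltt
  · have hup1 : sglueDist S (Sum.inr ⟨p, t⟩) (Sum.inr ⟨p', t'⟩) ≤
        ENNReal.ofReal (t : ℝ) + distToX (p : X × X).1 (Sum.inr ⟨p', t'⟩) := by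
      refine (sglueDist_triangle _ (Sum.inl (p : X × X).1) _).trans (add_le_add ?_ ?_)
      · rw [sglueDist_comm]; exact sglueDist_fst_le p t
      · exact sglueDist_inl_int_le _ p' t'
    have hup2 : sglueDist S (Sum.inr ⟨p, t⟩) (Sum.inr ⟨p', t'⟩) ≤
        ENNReal.ofReal ((edist (p : X × X).1 (p : X × X).2).toReal - (t : ℝ)) + distToX (p : X × X).2 (Sum.inr ⟨p', t'⟩) := by
      refine (sglueDist_triangle _ (Sum.inl (p : X × X).2) _).trans (add_le_add ?_ ?_)
      · rw [sglueDist_comm]; exact sglueDist_snd_le p t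
      · exact sglueDist_inl_int_le _ p' t'
    have hlow := sglueDist_cross_ge hfin p p' hpp t t'
    rcases le_total (ENNReal.ofReal (t : ℝ) + distToX (p : X × X).1 (Sum.inr ⟨p', t'⟩))
        (ENNReal.ofReal ((edist (p : X × X).1 (p : X × X).2).toReal - (t : ℝ)) + distToX (p : X × X).2 (Sum.inr ⟨p', t'⟩))
        with hAB | hAB
    · have hD : sglueDist S (Sum.inr ⟨p, t⟩) (Sum.inr ⟨p', t'⟩)
          = ENNReal.ofReal (t : ℝ) + distToX (p : X × X).1 (Sum.inr ⟨p', t'⟩) := by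
        refine le_antisymm hup1 ?_
        rw [min_eq_left hAB] at hlow
        exact hlow
      rw [hD] at htop
      have hWtop : distToX (p : X × X).1 (Sum.inr ⟨p', t'⟩) ≠ ⊤ :=
        fun h => htop (by rw [h, add_top])
      have hmem : (t : ℝ) / 2 ∈ Set.Icc (0 : ℝ) (edist (p : X × X).1 (p : X × X).2).toReal := ⟨by linarith, by linarith [t.2.2]⟩
      have hac : sglueDist S (Sum.inr ⟨p, t⟩) (Sum.inr ⟨p, ⟨(t : ℝ) / 2, hmem⟩⟩)
          ≤ ENNReal.ofReal ((t : ℝ) / 2) := by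
        refine (sglueDist_int_int_le p _ _).trans_eq ?_
        congr 1
        show |(t : ℝ) - (t : ℝ) / 2| = (t : ℝ) / 2
        rw [show (t : ℝ) - (t : ℝ) / 2 = (t : ℝ) / 2 by ring, abs_of_nonneg (by linarith)]
      have hcb : sglueDist S (Sum.inr ⟨p, ⟨(t : ℝ) / 2, hmem⟩⟩) (Sum.inr ⟨p', t'⟩)
          ≤ ENNReal.ofReal ((t : ℝ) / 2) + distToX (p : X × X).1 (Sum.inr ⟨p', t'⟩) := by
        refine (sglueDist_triangle _ (Sum.inl (p : X × X).1) _).trans (add_le_add ?_ ?_)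
        · rw [sglueDist_comm]; exact sglueDist_fst_le p ⟨(t : ℝ) / 2, hmem⟩
        · exact sglueDist_inl_int_le _ p' t'
      have hhalf : ENNReal.ofReal ((t : ℝ) / 2) + ENNReal.ofReal ((t : ℝ) / 2)
          = ENNReal.ofReal (t : ℝ) := by
        rw [← ENNReal.ofReal_add (by linarith) (by linarith), add_halves]
      have hltt : ENNReal.ofReal ((t : ℝ) / 2) < ENNReal.ofReal (t : ℝ) :=
        (ENNReal.ofReal_lt_ofReal_iff ht0).mpr (by linarith)
      refine ⟨_, mid_pattern hac hcb ?_ ?_ ?_⟩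
      · rw [hD, ← add_assoc, hhalf]
      · rw [hD]
        exact hltt.trans_le le_self_add
      · rw [hD]
        exact ENNReal.add_lt_add_right hWtop hltt
    · have hD : sglueDist S (Sum.inr ⟨p, t⟩) (Sum.inr ⟨p', t'⟩)
          = ENNReal.ofReal ((edist (p : X × X).1 (p : X × X).2).toReal - (t : ℝ)) + distToX (p : X × X).2 (Sum.inr ⟨p', t'⟩) := by
        refine le_antisymm hup2 ?_
        rw [min_eq_right hAB] at hlow
        exact hlow
      rw [hD] at htop
      have hWtop : distToX (p : X × X).2 (Sum.inr ⟨p', t'⟩) ≠ ⊤ :=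
        fun h => htop (by rw [h, add_top])
      have hmem : ((t : ℝ) + (edist (p : X × X).1 (p : X × X).2).toReal) / 2 ∈ Set.Icc (0 : ℝ) (edist (p : X × X).1 (p : X × X).2).toReal :=
        ⟨by linarith [t.2.1], by linarith⟩
      have hac : sglueDist S (Sum.inr ⟨p, t⟩) (Sum.inr ⟨p, ⟨((t : ℝ) + (edist (p : X × X).1 (p : X × X).2).toReal) / 2, hmem⟩⟩)
          ≤ ENNReal.ofReal (((edist (p : X × X).1 (p : X × X).2).toReal - (t : ℝ)) / 2) := by
        refine (sglueDist_int_int_le p _ _).trans_eq ?_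
        congr 1
        show |(t : ℝ) - ((t : ℝ) + (edist (p : X × X).1 (p : X × X).2).toReal) / 2| = ((edist (p : X × X).1 (p : X × X).2).toReal - (t : ℝ)) / 2
        rw [show (t : ℝ) - ((t : ℝ) + (edist (p : X × X).1 (p : X × X).2).toReal) / 2 = -(((edist (p : X × X).1 (p : X × X).2).toReal - (t : ℝ)) / 2) by ring, abs_neg,
          abs_of_nonneg (by linarith)]
      have hcb : sglueDist S (Sum.inr ⟨p, ⟨((t : ℝ) + (edist (p : X × X).1 (p : X × X).2).toReal) / 2, hmem⟩⟩) (Sum.inr ⟨p', t'⟩)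
          ≤ ENNReal.ofReal (((edist (p : X × X).1 (p : X × X).2).toReal - (t : ℝ)) / 2) + distToX (p : X × X).2 (Sum.inr ⟨p', t'⟩) := by
        refine (sglueDist_triangle _ (Sum.inl (p : X × X).2) _).trans (add_le_add ?_ ?_)
        · rw [sglueDist_comm]
          refine (sglueDist_snd_le p ⟨((t : ℝ) + (edist (p : X × X).1 (p : X × X).2).toReal) / 2, hmem⟩).trans_eq ?_
          congr 1
          show (edist (p : X × X).1 (p : X × X).2).toReal - ((t : ℝ) + (edist (p : X × X).1 (p : X × X).2).toReal) / 2 = ((edist (p : X × X).1 (p : X × X).2).toReal - (t : ℝ)) / 2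
          ring
        · exact sglueDist_inl_int_le _ p' t'
      have hhalf : ENNReal.ofReal (((edist (p : X × X).1 (p : X × X).2).toReal - (t : ℝ)) / 2) + ENNReal.ofReal (((edist (p : X × X).1 (p : X × X).2).toReal - (t : ℝ)) / 2)
          = ENNReal.ofReal ((edist (p : X × X).1 (p : X × X).2).toReal - (t : ℝ)) := by
        rw [← ENNReal.ofReal_add (by linarith) (by linarith), add_halves]
      have hltt : ENNReal.ofReal (((edist (p : X × X).1 (p : X × X).2).toReal - (t : ℝ)) / 2) < ENNReal.ofReal ((edist (p : X × X).1 (p : X × X).2).toReal - (t : ℝ)) :=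
        (ENNReal.ofReal_lt_ofReal_iff (by linarith)).mpr (by linarith)
      refine ⟨_, mid_pattern hac hcb ?_ ?_ ?_⟩
      · rw [hD, ← add_assoc, hhalf]
      · rw [hD]
        exact hltt.trans_le le_self_add
      · rw [hD]
        exact ENNReal.add_lt_add_right hWtop hltt

lemma convex_part (hfin : ∀ p : S, edist (p : X × X).1 (p : X × X).2 ≠ ⊤)
    (hSfull : ∀ x x' : X, x ≠ x' → edist x x' ≠ ⊤ → ¬ JoinedBySegment x x' → (x, x') ∈ S) :
    ∀ a b : SGlueSpace S, sglueDist S a b ≠ 0 → sglueDist S a b ≠ ⊤ →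
      ∃ c : SGlueSpace S, sglueDist S a c ≠ 0 ∧ sglueDist S c b ≠ 0 ∧
        sglueDist S a b = sglueDist S a c + sglueDist S c b := by
  intro a b h0 htop
  rcases normal_form a with ⟨x, hx⟩ | ⟨p, t, rfl, ht0, htL⟩
  · rcases normal_form b with ⟨y, hy⟩ | ⟨q, s, rfl, hs0, hsL⟩
    · have e3 : sglueDist S a b = sglueDist S (Sum.inl x) (Sum.inl y) :=
        sglueDist_transfer hx hy
      exact transfer hx hy (case_ll hfin hSfull x y (by rw [← e3]; exact h0)
        (by rw [← e3]; exact htop))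
    · have e3 : sglueDist S a (Sum.inr ⟨q, s⟩) = sglueDist S (Sum.inl x) (Sum.inr ⟨q, s⟩) :=
        sglueDist_transfer hx (sglueDist_self _)
      exact transfer hx (sglueDist_self _)
        (case_li hfin x q s hs0 hsL (by rw [← e3]; exact htop))
  · rcases normal_form b with ⟨y, hy⟩ | ⟨q, s, rfl, hs0, hsL⟩
    · have e3 : sglueDist S (Sum.inr ⟨p, t⟩) b
          = sglueDist S (Sum.inr ⟨p, t⟩) (Sum.inl y) :=
        sglueDist_transfer (sglueDist_self _) hy
      refine transfer (sglueDist_self _) hy (flip ?_)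
      refine case_li hfin y p t ht0 htL ?_
      rw [sglueDist_comm, ← e3]
      exact htop
    · exact transfer (sglueDist_self _) (sglueDist_self _)
        (case_ii hfin p q t s ht0 htL hs0 hsL h0 htop)

end CaseII


section Complete

open Filter

lemma sglueDist_triangle4 (a b c d : SGlueSpace S) :
    sglueDist S a d ≤ sglueDist S a b + sglueDist S b c + sglueDist S c d :=
  (sglueDist_triangle a c d).trans (add_le_add_left (sglueDist_triangle a b c) _)

lemma eps_mul_lt (c : ℝ≥0∞) (hc : c ≠ 0) (hctop : c ≠ ⊤) {ε : ℝ≥0∞} (hε : 0 < ε) :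
    ∃ K : ℕ, (2⁻¹ : ℝ≥0∞) ^ K * c < ε := by
  obtain ⟨K, hK⟩ := ENNReal.exists_inv_two_pow_lt (show ε / c ≠ 0 from
    (ENNReal.div_pos_iff.mpr ⟨hε.ne', hctop⟩).ne')
  exact ⟨K, (ENNReal.lt_div_iff_mul_lt (Or.inl hc) (Or.inl hctop)).mp hK⟩

lemma complete_part [CompleteSpace X] (hfin : ∀ p : S, edist (p : X × X).1 (p : X × X).2 ≠ ⊤) :
    ∀ u : ℕ → SGlueSpace S,
      (∀ ε : ℝ≥0∞, 0 < ε → ∃ N : ℕ, ∀ m n : ℕ, N ≤ m → N ≤ n →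
        sglueDist S (u m) (u n) < ε) →
      ∃ a : SGlueSpace S,
        Filter.Tendsto (fun n => sglueDist S (u n) a) Filter.atTop (nhds 0) := by
  intro u hu
  by_cases hA : ∀ ε : ℝ≥0∞, 0 < ε → ∀ N : ℕ, ∃ n, N ≤ n ∧ gX (u n) < ε
  · have he0 : ∀ k : ℕ, (0 : ℝ≥0∞) < 2⁻¹ ^ k :=
      fun k => ENNReal.pow_pos (ENNReal.inv_pos.mpr ENNReal.ofNat_ne_top) k
    have heanti : ∀ {k l : ℕ}, k ≤ l → (2⁻¹ : ℝ≥0∞) ^ l ≤ 2⁻¹ ^ k :=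
      fun h => pow_le_pow_of_le_one zero_le (ENNReal.inv_le_one.mpr one_le_two) h
    choose N hN using fun k => hu (2⁻¹ ^ k) (he0 k)
    have hNP : ∀ {j k : ℕ}, j ≤ k → N j ≤ (Finset.range (k + 1)).sup N :=
      fun {j k} h => Finset.le_sup (Finset.mem_range.mpr (Nat.lt_succ_of_le h))
    choose m hm using fun k => hA (2⁻¹ ^ k) (he0 k) ((Finset.range (k + 1)).sup N)
    choose xs hxs using fun k => exists_exit (S := S) (u (m k))
    have hxse : ∀ k, sglueDist S (u (m k)) (Sum.inl (xs k)) < 2⁻¹ ^ k :=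
      fun k => lt_of_le_of_lt (hxs k) (hm k).2
    have hdum : ∀ {k l : ℕ}, k ≤ l → sglueDist S (u (m k)) (u (m l)) < 2⁻¹ ^ k :=
      fun {k l} h => hN k (m k) (m l) ((hNP le_rfl).trans (hm k).1) ((hNP h).trans (hm l).1)
    have hkey : ∀ {k l : ℕ}, k ≤ l →
        edist (xs k) (xs l) ≤ 2⁻¹ ^ k + 2⁻¹ ^ k + 2⁻¹ ^ l := by
      intro k l h
      rw [← sglueDist_inl_inl hfin]
      refine (sglueDist_triangle4 _ (u (m k)) (u (m l)) _).trans ?_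
      refine add_le_add (add_le_add ?_ (hdum h).le) (hxse l).le
      rw [sglueDist_comm]; exact (hxse k).le
    have hcauchy : CauchySeq xs := by
      rw [EMetric.cauchySeq_iff]
      intro ε hε
      obtain ⟨K, hK⟩ := eps_mul_lt 3 (by norm_num) (by norm_num) hε
      have h3 : (2⁻¹ : ℝ≥0∞) ^ K + 2⁻¹ ^ K + 2⁻¹ ^ K = 2⁻¹ ^ K * 3 := by ring
      refine ⟨K, fun k hk l hl => ?_⟩
      rcases le_total k l with h | h
      · refine lt_of_le_of_lt ((hkey h).trans ?_) (h3.le.trans_lt hK)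
        exact add_le_add (add_le_add (heanti hk) (heanti hk)) (heanti hl)
      · rw [edist_comm]
        refine lt_of_le_of_lt ((hkey h).trans ?_) (h3.le.trans_lt hK)
        exact add_le_add (add_le_add (heanti hl) (heanti hl)) (heanti hk)
    obtain ⟨y, hy⟩ := cauchySeq_tendsto_of_complete hcauchy
    have hxy : ∀ k, edist (xs k) y ≤ 2⁻¹ ^ k + 2⁻¹ ^ k + 2⁻¹ ^ k := by
      intro k
      refine le_of_tendsto (tendsto_const_nhds.edist hy) ?_
      filter_upwards [eventually_ge_atTop k] with l hl
      exact (hkey hl).trans (add_le_add_right (heanti hl) _)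
    refine ⟨Sum.inl y, ENNReal.tendsto_atTop_zero.mpr ?_⟩
    intro ε hε
    obtain ⟨K, hK⟩ := eps_mul_lt 5 (by norm_num) (by norm_num) hε
    refine ⟨(Finset.range (K + 1)).sup N, fun n hn => ?_⟩
    have h1 : sglueDist S (u n) (u (m K)) < 2⁻¹ ^ K :=
      hN K n (m K) (le_trans (hNP le_rfl) hn) ((hNP le_rfl).trans (hm K).1)
    have h3 : sglueDist S (Sum.inl (xs K)) (Sum.inl y) ≤ 2⁻¹ ^ K + 2⁻¹ ^ K + 2⁻¹ ^ K := by
      rw [sglueDist_inl_inl hfin]; exact hxy K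
    calc sglueDist S (u n) (Sum.inl y)
        ≤ sglueDist S (u n) (u (m K)) + sglueDist S (u (m K)) (Sum.inl (xs K))
          + sglueDist S (Sum.inl (xs K)) (Sum.inl y) := sglueDist_triangle4 _ _ _ _
      _ ≤ 2⁻¹ ^ K + 2⁻¹ ^ K + (2⁻¹ ^ K + 2⁻¹ ^ K + 2⁻¹ ^ K) :=
          add_le_add (add_le_add h1.le (hxse K).le) h3
      _ = 2⁻¹ ^ K * 5 := by ring
      _ ≤ ε := hK.le
  · push_neg at hA
    obtain ⟨ε0, hε0, N0, hN0⟩ := hA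
    obtain ⟨N1, hN1⟩ := hu ε0 hε0
    have hinr : ∀ n, max N0 N1 ≤ n → ∃ (pr : S)
        (tr : Set.Icc (0 : ℝ) (edist (pr : X × X).1 (pr : X × X).2).toReal),
        u n = Sum.inr ⟨pr, tr⟩ := by
      intro n hn
      rcases hun : u n with z | ⟨pr, tr⟩
      · exfalso
        have hg := hN0 n (le_trans (le_max_left _ _) hn)
        rw [hun, gX_inl] at hg
        exact hε0.not_ge hg
      · exact ⟨pr, tr, rfl⟩
    obtain ⟨p0, t0, ht0⟩ := hinr (max N0 N1) le_rfl
    have hsame : ∀ n, max N0 N1 ≤ n → ∃ tr, u n = Sum.inr ⟨p0, tr⟩ := by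
      intro n hn
      obtain ⟨pr, tr, hr⟩ := hinr n hn
      by_cases hpp : pr = p0
      · subst hpp; exact ⟨tr, hr⟩
      · exfalso
        have hgg := sglueDist_cross_ge_gg hfin p0 pr hpp t0 tr
        have hlt := hN1 (max N0 N1) n (le_max_right _ _) (le_trans (le_max_right _ _) hn)
        rw [ht0, hr] at hlt
        have hg1 : ε0 ≤ gX (S := S) (Sum.inr ⟨p0, t0⟩) := by
          have hg := hN0 (max N0 N1) (le_max_left _ _); rwa [ht0] at hg
        have hg2 : ε0 ≤ gX (S := S) (Sum.inr ⟨pr, tr⟩) := by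
          have hg := hN0 n (le_trans (le_max_left _ _) hn); rwa [hr] at hg
        exact hlt.not_ge (le_trans (le_trans le_self_add (add_le_add hg1 hg2)) hgg)
    choose t ht using fun k => hsame (k + max N0 N1) (Nat.le_add_left _ k)
    have hC : CauchySeq (fun k => ((t k : ℝ))) := by
      rw [EMetric.cauchySeq_iff]
      intro ε hε
      obtain ⟨N2, hN2⟩ := hu ε hε
      refine ⟨N2, fun k hk l hl => ?_⟩
      have hd := hN2 (k + max N0 N1) (l + max N0 N1) (le_trans hk (Nat.le_add_right _ _))
        (le_trans hl (Nat.le_add_right _ _))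
      rw [ht k, ht l, sglueDist_int_int hfin] at hd
      show edist ((t k : ℝ)) ((t l : ℝ)) < ε
      rwa [edist_dist, Real.dist_eq]
    obtain ⟨τ, hτ⟩ := cauchySeq_tendsto_of_complete hC
    have hmemτ : τ ∈ Set.Icc (0 : ℝ) (edist (p0 : X × X).1 (p0 : X × X).2).toReal :=
      isClosed_Icc.mem_of_tendsto hτ (Filter.Eventually.of_forall fun k => (t k).2)
    refine ⟨Sum.inr ⟨p0, ⟨τ, hmemτ⟩⟩, ?_⟩
    have hev : ∀ n, max N0 N1 ≤ n → sglueDist S (u n) (Sum.inr ⟨p0, ⟨τ, hmemτ⟩⟩)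
        = edist ((t (n - max N0 N1) : ℝ)) τ := by
      intro n hn
      have hnW : n - max N0 N1 + max N0 N1 = n := Nat.sub_add_cancel hn
      have hform := ht (n - max N0 N1)
      rw [hnW] at hform
      rw [hform, sglueDist_int_int hfin, edist_dist, Real.dist_eq]
    have htend0 : Tendsto (fun k => edist ((t k : ℝ)) τ) atTop (nhds 0) := by
      have h := Filter.Tendsto.edist hτ (tendsto_const_nhds (x := τ))
      rwa [edist_self] at h
    have hcomp : Tendsto (fun n => edist ((t (n - max N0 N1) : ℝ)) τ) atTop (nhds 0) :=
      htend0.comp (tendsto_sub_atTop_nat _)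
    refine Filter.Tendsto.congr' ?_ hcomp
    filter_upwards [eventually_ge_atTop (max N0 N1)] with n hn
    exact (hev n hn).symm

end Complete

end SGlueAux

/-- Let `S` be a set of finite-distance pairs of distinct points of a complete extended
metric space `X`, containing every finite-distance pair of distinct points not joined by a
metric segment.  Then the `S`-convex completion of `X` — the gluing of `X` with one interval
`[0, d(x, x')]` for each `(x, x') ∈ S`, identified at its endpoints with `x` and `x'` — is
complete and convex (both properties stated on the disjoint union via the gluing
pseudodistance, points of the quotient being points at pseudodistance `0`). -/
theorem sglue_complete_convex [CompleteSpace X] (S : Set (X × X))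
    (hS : ∀ p ∈ S, p.1 ≠ p.2 ∧ edist p.1 p.2 ≠ ⊤)
    (hSfull : ∀ x x' : X, x ≠ x' → edist x x' ≠ ⊤ → ¬ JoinedBySegment x x' → (x, x') ∈ S) :
    (∀ u : ℕ → SGlueSpace S,
      (∀ ε : ℝ≥0∞, 0 < ε → ∃ N : ℕ, ∀ m n : ℕ, N ≤ m → N ≤ n →
        sglueDist S (u m) (u n) < ε) →
      ∃ a : SGlueSpace S,
        Filter.Tendsto (fun n => sglueDist S (u n) a) Filter.atTop (nhds 0)) ∧
    (∀ a b : SGlueSpace S, sglueDist S a b ≠ 0 → sglueDist S a b ≠ ⊤ →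
      ∃ c : SGlueSpace S, sglueDist S a c ≠ 0 ∧ sglueDist S c b ≠ 0 ∧
        sglueDist S a b = sglueDist S a c + sglueDist S c b) := by
  have hfin : ∀ p : S, edist (p : X × X).1 (p : X × X).2 ≠ ⊤ := fun p => (hS p p.2).2
  exact ⟨SGlueAux.complete_part hfin, SGlueAux.convex_part hfin hSfull⟩
end

section
/- Let (Y,d_Y) be a path metric space and suppose (Z,d_Z) is a retract of Y in the nonexpansive sense: there are nonexpansive maps h : Z → Y and π : Y → Z with π ∘ h = id_Z. Then (Z,d_Z) is a path metric space. -/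
open ENNReal NNReal

/-- The intrinsic (length) extended distance associated to an extended metric:
the infimum of lengths `ℓ` of `1`-Lipschitz curves `[0, ℓ] → X` joining the two points. -/
noncomputable def intrinsicEDist {X : Type*} [EMetricSpace X] (x x' : X) : ℝ≥0∞ :=
  sInf {L : ℝ≥0∞ | ∃ ℓ : ℝ≥0, L = (ℓ : ℝ≥0∞) ∧ ∃ φ : ℝ → X,
    LipschitzOnWith 1 φ (Set.Icc 0 (ℓ : ℝ)) ∧ φ 0 = x ∧ φ (ℓ : ℝ) = x'}

lemma edist_le_intrinsicEDist {X : Type*} [EMetricSpace X] (x x' : X) :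
    edist x x' ≤ intrinsicEDist x x' := by
  refine le_sInf ?_
  rintro L ⟨ℓ, rfl, φ, hφ, h0, h1⟩
  have h0m : (0 : ℝ) ∈ Set.Icc (0 : ℝ) (ℓ : ℝ) := ⟨le_refl _, ℓ.coe_nonneg⟩
  have h1m : (ℓ : ℝ) ∈ Set.Icc (0 : ℝ) (ℓ : ℝ) := ⟨ℓ.coe_nonneg, le_refl _⟩
  calc edist x x' = edist (φ 0) (φ (ℓ : ℝ)) := by rw [h0, h1]
    _ ≤ 1 * edist (0 : ℝ) (ℓ : ℝ) := hφ h0m h1m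
    _ = (ℓ : ℝ≥0∞) := by
        rw [one_mul, edist_dist, Real.dist_eq, zero_sub, abs_neg, abs_of_nonneg ℓ.coe_nonneg,
          ENNReal.ofReal_coe_nnreal]

lemma intrinsicEDist_map_le {X Y : Type*} [EMetricSpace X] [EMetricSpace Y]
    (f : X → Y) (hf : LipschitzWith 1 f) (x x' : X) :
    intrinsicEDist (f x) (f x') ≤ intrinsicEDist x x' := by
  refine sInf_le_sInf ?_
  rintro L ⟨ℓ, rfl, φ, hφ, h0, h1⟩
  exact ⟨ℓ, rfl, f ∘ φ, by simpa using (hf.comp_lipschitzOnWith hφ),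
    by simp [h0], by simp [h1]⟩

/-- A nonexpansive retract of a path metric space is a path metric space. -/
theorem retract_path_metric {Y Z : Type*} [EMetricSpace Y] [EMetricSpace Z]
    (hY : ∀ y y' : Y, edist y y' = intrinsicEDist y y')
    (h : Z → Y) (π : Y → Z)
    (hh : LipschitzWith 1 h) (hπ : LipschitzWith 1 π)
    (hretr : π ∘ h = id) :
    ∀ z z' : Z, edist z z' = intrinsicEDist z z' := by
  intro z z'
  refine le_antisymm (edist_le_intrinsicEDist z z') ?_
  have key := intrinsicEDist_map_le π hπ (h z) (h z')
  have hz : π (h z) = z := congrFun hretr z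
  have hz' : π (h z') = z' := congrFun hretr z'
  rw [hz, hz'] at key
  calc intrinsicEDist z z' ≤ intrinsicEDist (h z) (h z') := key
    _ = edist (h z) (h z') := (hY _ _).symm
    _ ≤ 1 * edist z z' := hh z z'
    _ = edist z z' := one_mul _
end
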